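/- (Björck–Saffari, Case 1.) Let N be a positive integer, and let n > 1 be such that n² is the largest square dividing N (i.e. n² ∣ N and for every d with d² ∣ N one has d ≤ n); set m := N/n. Assume n is even or m is odd. Let c : Fin n → ℂ satisfy ‖c h‖ = 1 for all h, let τ be a permutation of Fin n, and let ρ : ℂ be a primitive m-th root of unity. Define f : ZMod N → ℂ by writing each k ∈ ZMod N as k.val = n·r + h with 0 ≤ h < n and 0 ≤ r < m, and setting f k = c h · ρ^(r·(τ h).val + n·(r·(r-1)/2)). Then f is biunimodular: ‖f k‖ = 1 for all k, and ‖f̂ c'‖ = 1 for all c' ∈ ZMod N. -/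

import Mathlib

open Complex Finset


private lemma BS_tri_succ (r : ℕ) : (r + 1) * ((r + 1) - 1) / 2 = r * (r - 1) / 2 + r := by
  rw [← Nat.choose_two_right, ← Nat.choose_two_right]
  rw [Nat.choose_succ_succ]
  simp [Nat.choose_one_right, add_comm]

/-- quadratic phase -/
noncomputable def BSg (ρ : ℂ) (n r : ℕ) : ℂ := ρ ^ (n * (r * (r - 1) / 2))

private lemma BSg_succ (ρ : ℂ) (n r : ℕ) : BSg ρ n (r + 1) = BSg ρ n r * ρ ^ (n * r) := by
  unfold BSg
  rw [BS_tri_succ, Nat.mul_add, pow_add]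

private lemma BSg_add (ρ : ℂ) (n r s : ℕ) :
    BSg ρ n (r + s) = BSg ρ n r * BSg ρ n s * ρ ^ (n * (r * s)) := by
  induction s with
  | zero => simp [BSg]
  | succ s ih =>
    rw [← add_assoc, BSg_succ, ih, BSg_succ,
      show n * (r + s) = n * r + n * s by ring, pow_add,
      show n * (r * (s + 1)) = n * (r * s) + n * r by ring, pow_add]
    ring

private lemma BS_even_mul_pred (m : ℕ) : 2 ∣ m * (m - 1) := by
  rcases Nat.even_or_odd m with h | h
  · exact Dvd.dvd.mul_right h.two_dvd _
  · obtain ⟨u, hu⟩ := h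
    exact Dvd.dvd.mul_left (by omega) m

private lemma BS_div1 {n m : ℕ} (hc : Even n ∨ Odd m) : m ∣ n * (m * (m - 1) / 2) := by
  rcases hc with h | h
  · obtain ⟨t, ht⟩ := h
    have h2 : m * (m - 1) / 2 * 2 = m * (m - 1) := Nat.div_mul_cancel (BS_even_mul_pred m)
    refine ⟨t * (m - 1), ?_⟩
    calc n * (m * (m - 1) / 2) = m * (m - 1) / 2 * 2 * t := by rw [ht]; ring
      _ = m * (m - 1) * t := by rw [h2]
      _ = m * (t * (m - 1)) := by ring
  · obtain ⟨u, hu⟩ := h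
    have h1 : m * (m - 1) / 2 = m * u := by
      subst hu
      rw [show 2 * u + 1 - 1 = 2 * u by omega]
      rw [show (2 * u + 1) * (2 * u) = (2 * u + 1) * u * 2 by ring]
      rw [Nat.mul_div_cancel _ (by norm_num)]
    exact ⟨n * u, by rw [h1]; ring⟩

private lemma BS_div2 {n m' : ℕ} (hc : Even n ∨ Odd m') :
    n * m' ∣ n ^ 2 * (m' * (m' - 1) / 2) := by
  rcases hc with h | h
  · obtain ⟨t, ht⟩ := h
    have h2 : m' * (m' - 1) / 2 * 2 = m' * (m' - 1) := Nat.div_mul_cancel (BS_even_mul_pred m')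
    refine ⟨t * (m' - 1), ?_⟩
    calc n ^ 2 * (m' * (m' - 1) / 2) = n * t * (m' * (m' - 1) / 2 * 2) := by rw [ht]; ring
      _ = n * t * (m' * (m' - 1)) := by rw [h2]
      _ = n * m' * (t * (m' - 1)) := by ring
  · obtain ⟨u, hu⟩ := h
    have h1 : m' * (m' - 1) / 2 = m' * u := by
      subst hu
      rw [show 2 * u + 1 - 1 = 2 * u by omega]
      rw [show (2 * u + 1) * (2 * u) = (2 * u + 1) * u * 2 by ring]
      rw [Nat.mul_div_cancel _ (by norm_num)]
    exact ⟨n * u, by rw [h1]; ring⟩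

private lemma BS_sum_shift {F : ℕ → ℂ} {m : ℕ} (hF : ∀ r, F (r + m) = F r) (c : ℕ) :
    ∑ r ∈ range m, F (r + c) = ∑ r ∈ range m, F r := by
  induction c with
  | zero => simp
  | succ c ih =>
    have key : ∀ G : ℕ → ℂ, G m = G 0 →
        ∑ r ∈ range m, G (r + 1) = ∑ r ∈ range m, G r := by
      intro G hG
      have h1 := Finset.sum_range_succ' G m
      have h2 := Finset.sum_range_succ G m
      rw [h2] at h1
      rw [hG] at h1
      exact (add_right_cancel h1).symm
    have := key (fun r => F (r + c)) (by simpa [add_comm, add_assoc, add_left_comm] using hF c)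
    simp only [show ∀ r, r + 1 + c = r + (c + 1) by omega] at this
    rw [this, ih]

private lemma BS_sum_mul (F : ℕ → ℂ) (d e : ℕ) :
    ∑ i ∈ range (d * e), F i = ∑ q ∈ range d, ∑ w ∈ range e, F (e * q + w) := by
  induction d with
  | zero => simp
  | succ d ih =>
    rw [Nat.succ_mul, Finset.sum_range_add, ih, Finset.sum_range_succ]
    congr 1
    refine Finset.sum_congr rfl fun w _ => ?_
    rw [mul_comm e d]


section scratch
variable {m n m' a : ℕ} {ζ ρ : ℂ}

private lemma BSg_mul_left (hm : m = n * m') (hρm : ρ ^ m = 1) (q : ℕ) :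
    BSg ρ n (m' * q) = (BSg ρ n m') ^ q := by
  induction q with
  | zero => simp [BSg]
  | succ q ih =>
    have h1 : ρ ^ (n * (m' * q * m')) = 1 := by
      rw [show n * (m' * q * m') = m * (q * m') by rw [hm]; ring, pow_mul, hρm, one_pow]
    rw [show m' * (q + 1) = m' * q + m' from by ring, BSg_add, ih, h1, mul_one, pow_succ]

private lemma BS_w_pow (hm : m = n * m') (hρm : ρ ^ m = 1) (hζm : ζ ^ m = 1)
    (hcase' : Even n ∨ Odd m') (v : ℕ) :
    (BSg ρ n m' * ζ ^ (m' * v)) ^ n = 1 := by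
  obtain ⟨q, hq⟩ := BS_div2 (n := n) (m' := m') hcase'
  have h1 : (BSg ρ n m') ^ n = 1 := by
    rw [BSg, ← pow_mul, show n * (m' * (m' - 1) / 2) * n = n ^ 2 * (m' * (m' - 1) / 2) by ring,
      hq, ← hm, pow_mul, hρm, one_pow]
  have h2 : (ζ ^ (m' * v)) ^ n = 1 := by
    rw [← pow_mul, show m' * v * n = m * v by rw [hm]; ring, pow_mul, hζm, one_pow]
  rw [mul_pow, h1, h2, mul_one]

private lemma BS_gauss (hm : m = n * m') (hn : 0 < n) (hm'0 : 0 < m')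
    (hζ : IsPrimitiveRoot ζ m) (hρ : IsPrimitiveRoot ρ m)
    (hcase : Even n ∨ Odd m) (u : ℕ) :
    (∑ r ∈ range m, BSg ρ n r * ζ ^ (r * u)) *
      (starRingEnd ℂ) (∑ r ∈ range m, BSg ρ n r * ζ ^ (r * u)) =
    (m : ℂ) * ∑ j ∈ range n, (BSg ρ n m' * ζ ^ (m' * u)) ^ j := by
  have hm0 : 0 < m := by rw [hm]; positivity
  have hρm : ρ ^ m = 1 := hρ.pow_eq_one
  have hζm : ζ ^ m = 1 := hζ.pow_eq_one
  have hunit : ∀ z : ℂ, z ^ m = 1 → (starRingEnd ℂ) z * z = 1 := by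
    intro z hz
    have h1 : ‖z‖ = 1 := Complex.norm_eq_one_of_pow_eq_one hz hm0.ne'
    rw [mul_comm, Complex.mul_conj, Complex.normSq_eq_norm_sq, h1]
    norm_num
  have hρ1 := hunit ρ hρm
  have hζ1 := hunit ζ hζm
  set F : ℕ → ℂ := fun r => BSg ρ n r * ζ ^ (r * u) with hF
  have hBSgm : BSg ρ n m = 1 := by
    obtain ⟨q, hq⟩ := BS_div1 (n := n) (m := m) hcase
    rw [BSg, hq, pow_mul, hρm, one_pow]
  have hFper : ∀ r, F (r + m) = F r := by
    intro r
    have h1 : ρ ^ (n * (r * m)) = 1 := by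
      rw [show n * (r * m) = m * (n * r) by ring, pow_mul, hρm, one_pow]
    have h2 : ζ ^ ((r + m) * u) = ζ ^ (r * u) * (ζ ^ m) ^ u := by
      rw [← pow_mul, ← pow_add]; congr 1; ring
    simp only [hF]
    rw [BSg_add, hBSgm, h1, h2, hζm, one_pow]
    ring
  have hρn : IsPrimitiveRoot (ρ ^ n) m' := hρ.pow hm0 hm
  have hstep : ∀ s t : ℕ, (starRingEnd ℂ) (F s) * F (t + s) =
      BSg ρ n t * ζ ^ (t * u) * (ρ ^ (n * t)) ^ s := by
    intro s t
    have e1 : (starRingEnd ℂ) (F s) =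
        ((starRingEnd ℂ) ρ) ^ (n * (s * (s - 1) / 2)) * ((starRingEnd ℂ) ζ) ^ (s * u) := by
      simp [hF, BSg, map_mul, map_pow]
    have e2 : F (t + s) = BSg ρ n t * BSg ρ n s * (ρ ^ (n * t)) ^ s * ζ ^ (t * u) * ζ ^ (s * u) := by
      simp only [hF]
      rw [BSg_add, show (t + s) * u = t * u + s * u by ring, pow_add,
        show n * (t * s) = n * t * s by ring, pow_mul]
      ring
    rw [e1, e2]
    have e3 : ((starRingEnd ℂ) ρ) ^ (n * (s * (s - 1) / 2)) * BSg ρ n s = 1 := by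
      rw [BSg, ← mul_pow, hρ1, one_pow]
    have e4 : ((starRingEnd ℂ) ζ) ^ (s * u) * ζ ^ (s * u) = 1 := by
      rw [← mul_pow, hζ1, one_pow]
    calc ((starRingEnd ℂ) ρ) ^ (n * (s * (s - 1) / 2)) * ((starRingEnd ℂ) ζ) ^ (s * u) *
          (BSg ρ n t * BSg ρ n s * (ρ ^ (n * t)) ^ s * ζ ^ (t * u) * ζ ^ (s * u))
        = (((starRingEnd ℂ) ρ) ^ (n * (s * (s - 1) / 2)) * BSg ρ n s) *
          (((starRingEnd ℂ) ζ) ^ (s * u) * ζ ^ (s * u)) *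
          (BSg ρ n t * ζ ^ (t * u) * (ρ ^ (n * t)) ^ s) := by ring
      _ = BSg ρ n t * ζ ^ (t * u) * (ρ ^ (n * t)) ^ s := by rw [e3, e4]; ring
  have hinner : ∀ t : ℕ, ∑ s ∈ range m, (ρ ^ (n * t)) ^ s =
      if m' ∣ t then (m : ℂ) else 0 := by
    intro t
    by_cases hd : m' ∣ t
    · obtain ⟨q, rfl⟩ := hd
      have h1 : ρ ^ (n * (m' * q)) = 1 := by
        rw [show n * (m' * q) = m * q by rw [hm]; ring, pow_mul, hρm, one_pow]
      simp [h1, if_pos, Finset.sum_const, Finset.card_range]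
    · have hx1 : ρ ^ (n * t) ≠ 1 := by
        intro h
        exact hd ((hρn.pow_eq_one_iff_dvd t).mp (by rw [← pow_mul]; exact h))
      have hxm : (ρ ^ (n * t)) ^ m = 1 := by
        rw [← pow_mul, show n * t * m = m * (n * t) by ring, pow_mul, hρm, one_pow]
      rw [geom_sum_eq hx1, hxm]
      simp [hd]
  calc (∑ r ∈ range m, F r) * (starRingEnd ℂ) (∑ r ∈ range m, F r)
      = ∑ s ∈ range m, (starRingEnd ℂ) (F s) * ∑ t ∈ range m, F (t + s) := by
        rw [map_sum, mul_comm, Finset.sum_mul]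
        exact Finset.sum_congr rfl fun s _ => by rw [BS_sum_shift hFper s]
    _ = ∑ s ∈ range m, ∑ t ∈ range m, BSg ρ n t * ζ ^ (t * u) * (ρ ^ (n * t)) ^ s := by
        refine Finset.sum_congr rfl fun s _ => ?_
        rw [Finset.mul_sum]
        exact Finset.sum_congr rfl fun t _ => hstep s t
    _ = ∑ t ∈ range m, (BSg ρ n t * ζ ^ (t * u)) * ∑ s ∈ range m, (ρ ^ (n * t)) ^ s := by
        rw [Finset.sum_comm]
        exact Finset.sum_congr rfl fun t _ => by rw [Finset.mul_sum]
    _ = ∑ t ∈ range m, (BSg ρ n t * ζ ^ (t * u)) * (if m' ∣ t then (m : ℂ) else 0) := by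
        exact Finset.sum_congr rfl fun t _ => by rw [hinner t]
    _ = ∑ q ∈ range n, ∑ w ∈ range m',
          (BSg ρ n (m' * q + w) * ζ ^ ((m' * q + w) * u)) *
            (if m' ∣ m' * q + w then (m : ℂ) else 0) := by
        rw [hm]; exact BS_sum_mul _ n m'
    _ = ∑ q ∈ range n, (BSg ρ n (m' * q) * ζ ^ ((m' * q) * u)) * (m : ℂ) := by
        refine Finset.sum_congr rfl fun q _ => ?_
        rw [Finset.sum_eq_single_of_mem 0 (Finset.mem_range.mpr hm'0)]
        · simp
        · intro w hw hw0
          have : ¬ m' ∣ m' * q + w := by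
            rw [Nat.dvd_add_right ⟨q, rfl⟩]
            exact fun h => hw0 (Nat.eq_zero_of_dvd_of_lt h (Finset.mem_range.mp hw))
          rw [if_neg this, mul_zero]
    _ = (m : ℂ) * ∑ j ∈ range n, (BSg ρ n m' * ζ ^ (m' * u)) ^ j := by
        rw [Finset.mul_sum]
        refine Finset.sum_congr rfl fun q _ => ?_
        rw [BSg_mul_left hm hρm, show (m' * q) * u = (m' * u) * q by ring, pow_mul, ← mul_pow]
        ring
end scratch


/-- The unitarily normalized discrete Fourier transform on `ZMod N`. -/
noncomputable def dft1 (N : ℕ) [NeZero N] (f : ZMod N → ℂ) : ZMod N → ℂ :=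
  fun c => (1 / Real.sqrt N : ℂ) * ∑ k : ZMod N,
    Complex.exp (2 * Real.pi * Complex.I * (k.val * c.val) / N) * f k

/-- Björck–Saffari, Case 1: if `n > 1` with `n²` the largest square dividing `N`,
`m = N/n`, and `n` is even or `m` is odd, then for any unimodular sequence `c`, any
permutation `τ` of `Fin n`, and any primitive `m`-th root of unity `ρ`, the function
`f(nr + h) = c_h · ρ^(r·τ(h) + n·r(r-1)/2)` is biunimodular. -/
theorem stmt_17 (N n : ℕ) [NeZero N] (hNpos : 0 < N) (hn : 1 < n)
    (hsq : n ^ 2 ∣ N) (hmax : ∀ d : ℕ, d ^ 2 ∣ N → d ≤ n)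
    (m : ℕ) (hm : m = N / n) (hcase : Even n ∨ Odd m)
    (c : Fin n → ℂ) (hc : ∀ h : Fin n, ‖c h‖ = 1)
    (τ : Equiv.Perm (Fin n)) (ρ : ℂ) (hρ : IsPrimitiveRoot ρ m)
    (f : ZMod N → ℂ)
    (hf : ∀ k : ZMod N,
      f k = c ⟨k.val % n, Nat.mod_lt _ (by omega)⟩ *
        ρ ^ ((k.val / n) * (τ ⟨k.val % n, Nat.mod_lt _ (by omega)⟩).val +
             n * (k.val / n * (k.val / n - 1) / 2))) :
    (∀ k : ZMod N, ‖f k‖ = 1) ∧ (∀ c' : ZMod N, ‖dft1 N f c'‖ = 1) := by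
  have hn0 : 0 < n := by omega
  have hndvd : n ∣ N := dvd_trans (dvd_pow_self n two_ne_zero) hsq
  have hN : N = n * m := by rw [hm, Nat.mul_div_cancel' hndvd]
  have hm0 : 0 < m := by
    rcases Nat.eq_zero_or_pos m with h | h
    · rw [h, mul_zero] at hN; omega
    · exact h
  have hnm : n ∣ m := by
    have h1 : n * n ∣ n * m := by rw [← hN]; simpa [pow_two] using hsq
    exact (Nat.mul_dvd_mul_iff_left hn0).mp h1
  set m' := m / n with hm'def
  have hmm' : m = n * m' := (Nat.mul_div_cancel' hnm).symm
  have hm'0 : 0 < m' := by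
    rcases Nat.eq_zero_or_pos m' with h | h
    · rw [h, mul_zero] at hmm'; omega
    · exact h
  haveI : NeZero m := ⟨hm0.ne'⟩
  haveI : NeZero n := ⟨hn0.ne'⟩
  have hρm : ρ ^ m = 1 := hρ.pow_eq_one
  have part1 : ∀ k : ZMod N, ‖f k‖ = 1 := by
    intro k
    rw [hf k, norm_mul, hc, one_mul, norm_pow,
      Complex.norm_eq_one_of_pow_eq_one hρm hm0.ne', one_pow]
  refine ⟨part1, ?_⟩
  intro c'
  have hcase' : Even n ∨ Odd m' := by
    rcases hcase with h | h
    · exact Or.inl h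
    · right; rw [hmm'] at h; exact (Nat.odd_mul.mp h).2
  have hζ : IsPrimitiveRoot (Complex.exp (2 * Real.pi * Complex.I / m)) m :=
    Complex.isPrimitiveRoot_exp m hm0.ne'
  set ζ := Complex.exp (2 * Real.pi * Complex.I / m) with hζdef
  have hζm : ζ ^ m = 1 := hζ.pow_eq_one
  obtain ⟨a, ha_lt, haζ⟩ := hζ.eq_pow_of_pow_eq_one hρm
  have ha_cop : a.Coprime m := (hζ.pow_iff_coprime hm0 a).mp (by rw [haζ]; exact hρ)
  set u : Fin n → ℕ := fun h => c'.val + a * (τ h).val with hu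
  set G : ℕ → ℂ := fun v => ∑ r ∈ Finset.range m, BSg ρ n r * ζ ^ (r * v) with hG
  set E : Fin n → ℂ :=
    fun h => Complex.exp (2 * Real.pi * Complex.I * (((h : ℕ) : ℂ) * ((c'.val : ℕ) : ℂ)) / N)
    with hE
  -- the central sum identity
  have hsum : ∑ k : ZMod N, Complex.exp (2 * Real.pi * Complex.I * (k.val * c'.val) / N) * f k
      = ∑ h : Fin n, (c h * E h) * G (u h) := by
    set F₀ : ℕ → ℂ := fun i =>
      Complex.exp (2 * Real.pi * Complex.I * (i * c'.val) / N) *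
        (c ⟨i % n, Nat.mod_lt _ (by omega)⟩ *
          ρ ^ ((i / n) * (τ ⟨i % n, Nat.mod_lt _ (by omega)⟩).val +
               n * (i / n * (i / n - 1) / 2))) with hF₀
    have s1 : ∑ k : ZMod N, Complex.exp (2 * Real.pi * Complex.I * (k.val * c'.val) / N) * f k
        = ∑ k : ZMod N, F₀ k.val := by
      refine Finset.sum_congr rfl fun k _ => ?_
      rw [hf k]
    have s2 : ∑ k : ZMod N, F₀ k.val = ∑ i ∈ Finset.range N, F₀ i :=
      Finset.sum_bij' (fun (k : ZMod N) _ => k.val) (fun i _ => ((i : ℕ) : ZMod N))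
        (fun k _ => Finset.mem_range.mpr (ZMod.val_lt k))
        (fun i _ => Finset.mem_univ _)
        (fun k _ => ZMod.natCast_rightInverse k)
        (fun i hi => ZMod.val_cast_of_lt (Finset.mem_range.mp hi))
        (fun k _ => rfl)
    rw [s1, s2, show N = m * n by rw [hN, mul_comm], BS_sum_mul F₀ m n, Finset.sum_comm,
      ← Fin.sum_univ_eq_sum_range (fun w => ∑ q ∈ Finset.range m, F₀ (n * q + w)) n]
    refine Finset.sum_congr rfl fun h _ => ?_
    simp only [hG]
    rw [Finset.mul_sum]
    refine Finset.sum_congr rfl fun q hq => ?_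
    have hmod : (n * q + (h : ℕ)) % n = (h : ℕ) := by
      rw [Nat.mul_add_mod, Nat.mod_eq_of_lt h.isLt]
    have hdiv : (n * q + (h : ℕ)) / n = q := by
      rw [Nat.mul_add_div hn0, Nat.div_eq_of_lt h.isLt, add_zero]
    have hfin : (⟨(n * q + (h : ℕ)) % n, Nat.mod_lt _ (by omega)⟩ : Fin n) = h :=
      Fin.ext (by exact hmod)
    simp only [hF₀, hfin, hdiv]
    have hexp : Complex.exp (2 * Real.pi * Complex.I *
          (((n * q + (h : ℕ) : ℕ) : ℂ) * ((c'.val : ℕ) : ℂ)) / N)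
        = E h * ζ ^ (q * c'.val) := by
      simp only [hE, hζdef]
      rw [← Complex.exp_nat_mul, ← Complex.exp_add]
      congr 1
      have hNc : (N : ℂ) = (n : ℂ) * (m : ℂ) := by rw [hN]; push_cast; ring
      have hn0' : (n : ℂ) ≠ 0 := Nat.cast_ne_zero.mpr hn0.ne'
      have hm0' : (m : ℂ) ≠ 0 := Nat.cast_ne_zero.mpr hm0.ne'
      rw [hNc]
      push_cast
      field_simp
      try ring
    have hrho : ρ ^ (q * (τ h).val + n * (q * (q - 1) / 2))
        = ζ ^ (q * (a * (τ h).val)) * BSg ρ n q := by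
      rw [pow_add, BSg]
      congr 1
      rw [← haζ, ← pow_mul]
      congr 1
      ring
    rw [hexp, hrho]
    have hz2 : ζ ^ (q * c'.val) * ζ ^ (q * (a * (τ h).val)) = ζ ^ (q * u h) := by
      rw [← pow_add]
      congr 1
      simp only [hu]
      ring
    calc E h * ζ ^ (q * c'.val) * (c h * (ζ ^ (q * (a * (τ h).val)) * BSg ρ n q))
        = (c h * E h) * (BSg ρ n q * (ζ ^ (q * c'.val) * ζ ^ (q * (a * (τ h).val)))) := by ring
      _ = (c h * E h) * (BSg ρ n q * ζ ^ (q * u h)) := by rw [hz2]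
  -- the distinguished index h₀
  have hξ : IsPrimitiveRoot (ζ ^ m') n := hζ.pow hm0 (by rw [hmm']; ring)
  have hη : IsPrimitiveRoot ((ζ ^ m') ^ a) n := hξ.pow_of_coprime a (ha_cop.coprime_dvd_right hnm)
  set w : Fin n → ℂ := fun h => BSg ρ n m' * ζ ^ (m' * u h) with hw
  have hwpow : ∀ h, (w h) ^ n = 1 := fun h => BS_w_pow hmm' hρm hζm hcase' (u h)
  set z : ℂ := BSg ρ n m' * ζ ^ (m' * c'.val) with hz
  have hz_pow : z ^ n = 1 := BS_w_pow hmm' hρm hζm hcase' c'.val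
  have hz0 : z ≠ 0 := by
    intro h0
    rw [h0, zero_pow hn0.ne'] at hz_pow
    exact one_ne_zero hz_pow.symm
  have hw_eq : ∀ h, w h = z * ((ζ ^ m') ^ a) ^ (τ h).val := by
    intro h
    have e : ((ζ ^ m') ^ a) ^ (τ h).val = ζ ^ (m' * (a * (τ h).val)) := by
      rw [← pow_mul, ← pow_mul]
    rw [hw, hz, e, mul_assoc, ← pow_add, ← Nat.mul_add]
  obtain ⟨j, hj, hjz⟩ := hη.eq_pow_of_pow_eq_one
    (show (z⁻¹) ^ n = 1 by rw [inv_pow, hz_pow, inv_one])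
  set h₀ : Fin n := τ.symm ⟨j, hj⟩ with hh₀
  have hτh₀ : (τ h₀).val = j := by rw [hh₀, Equiv.apply_symm_apply]
  have hwh₀ : w h₀ = 1 := by
    rw [hw_eq, hτh₀, hjz, mul_inv_cancel₀ hz0]
  have hwne : ∀ h : Fin n, h ≠ h₀ → w h ≠ 1 := by
    intro h hne hw1
    rw [hw_eq] at hw1
    have h1 : ((ζ ^ m') ^ a) ^ (τ h).val = z⁻¹ := eq_inv_of_mul_eq_one_left (by
      rw [mul_comm]; exact hw1)
    have h2 : ((ζ ^ m') ^ a) ^ (τ h).val = ((ζ ^ m') ^ a) ^ (τ h₀).val := by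
      rw [h1, hτh₀, hjz]
    have h3 := hη.pow_inj (τ h).isLt (τ h₀).isLt h2
    exact hne (τ.injective (Fin.ext h3))
  have hGkey : ∀ h : Fin n, G (u h) * (starRingEnd ℂ) (G (u h))
      = (m : ℂ) * ∑ j ∈ Finset.range n, (w h) ^ j :=
    fun h => BS_gauss hmm' hn0 hm'0 hζ hρ hcase (u h)
  have hGzero : ∀ h : Fin n, h ≠ h₀ → G (u h) = 0 := by
    intro h hne
    have hsum0 : ∑ j ∈ Finset.range n, (w h) ^ j = 0 := by
      rw [geom_sum_eq (hwne h hne), hwpow h]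
      simp
    have h1 := hGkey h
    rw [hsum0, mul_zero] at h1
    have h2 : (Complex.normSq (G (u h)) : ℂ) = 0 := by rw [← Complex.mul_conj]; exact h1
    exact Complex.normSq_eq_zero.mp (by exact_mod_cast h2)
  have hGval : Complex.normSq (G (u h₀)) = (m : ℝ) * n := by
    have h1 := hGkey h₀
    rw [hwh₀] at h1
    simp only [one_pow, Finset.sum_const, Finset.card_range, nsmul_eq_mul, mul_one] at h1
    have h2 : (Complex.normSq (G (u h₀)) : ℂ) = (m : ℂ) * n := by
      rw [← Complex.mul_conj]; exact h1
    exact_mod_cast h2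
  have hdft : dft1 N f c' = (1 / Real.sqrt N : ℂ) * ((c h₀ * E h₀) * G (u h₀)) := by
    show (1 / Real.sqrt N : ℂ) * ∑ k : ZMod N,
        Complex.exp (2 * Real.pi * Complex.I * (k.val * c'.val) / N) * f k = _
    rw [hsum, Fintype.sum_eq_single h₀ (fun h hne => by rw [hGzero h hne, mul_zero])]
  have hEnorm : ‖E h₀‖ = 1 := by
    have harg : 2 * (Real.pi : ℂ) * Complex.I * (((h₀ : ℕ) : ℂ) * ((c'.val : ℕ) : ℂ)) / N
        = ((2 * Real.pi * ((h₀ : ℕ) * c'.val) / N : ℝ) : ℂ) * Complex.I := by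
      push_cast
      ring
    rw [hE]
    simp only
    rw [harg, Complex.norm_exp_ofReal_mul_I]
  have hGnorm : ‖G (u h₀)‖ = Real.sqrt N := by
    rw [Complex.norm_def, hGval]
    congr 1
    rw [hN]
    push_cast
    ring
  have hsN : (0 : ℝ) < Real.sqrt N := Real.sqrt_pos.mpr (by exact_mod_cast hNpos)
  have h1N : ‖(1 / Real.sqrt N : ℂ)‖ = 1 / Real.sqrt N := by
    rw [norm_div, norm_one, Complex.norm_real, Real.norm_eq_abs, abs_of_pos hsN]
  rw [hdft, norm_mul, norm_mul, norm_mul, h1N, hc h₀, hEnorm, hGnorm, one_mul, one_mul, one_div,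
    inv_mul_cancel₀ hsN.ne']
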